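/- For idempotents f_1, f_2 of the Kiselman semigroup K_n, the natural order f_1 ≤ f_2 (meaning f_1 f_2 = f_2 f_1 = f_1) holds if and only if the content of f_2 is contained in the content of f_1. -/

import Mathlib

/-- The defining relations of the Kiselman semigroup `K_n`:
`aᵢ² = aᵢ`, and `aᵢaⱼaᵢ = aⱼaᵢaⱼ = aⱼaᵢ` for `i < j`. -/
inductive KisRel (n : ℕ) : FreeMonoid (Fin n) → FreeMonoid (Fin n) → Prop
  | idem (i : Fin n) : KisRel n (.of i * .of i) (.of i)
  | braid₁ {i j : Fin n} (h : i < j) :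
      KisRel n (.of i * .of j * .of i) (.of j * .of i)
  | braid₂ {i j : Fin n} (h : i < j) :
      KisRel n (.of j * .of i * .of j) (.of j * .of i)

/-- The Kiselman semigroup (monoid) `K_n`. -/
abbrev Kiselman (n : ℕ) := PresentedMonoid (KisRel n)

/-- The canonical projection from the free monoid on the generators to `K_n`. -/
def kmk (n : ℕ) : FreeMonoid (Fin n) →* Kiselman n := PresentedMonoid.mk (KisRel n)

/-- The generator `a_{i+1}` (0-indexed: `ka i` is the paper's `a_{i+1}`). -/
def ka {n : ℕ} (i : Fin n) : Kiselman n := PresentedMonoid.of (KisRel n) i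

/-- The idempotent `e_X`: the product of the generators indexed by `X` in strictly
decreasing order of indices. -/
def eX {n : ℕ} (X : Finset (Fin n)) : Kiselman n :=
  kmk n (FreeMonoid.ofList ((X.sort (· ≤ ·)).reverse))

/- ### Auxiliary material -/

namespace KiselmanAux

variable {n : ℕ}

/-- The image of a list of generators in the Kiselman monoid. -/
def mkl (l : List (Fin n)) : Kiselman n := kmk n (FreeMonoid.ofList l)

lemma mkl_append (l₁ l₂ : List (Fin n)) : mkl (l₁ ++ l₂) = mkl l₁ * mkl l₂ := by
  simp [mkl, FreeMonoid.ofList_append, map_mul]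

lemma mkl_cons (a : Fin n) (l : List (Fin n)) : mkl (a :: l) = ka a * mkl l := by
  simp [mkl, FreeMonoid.ofList_cons, map_mul]
  rfl

lemma mkl_nil : mkl ([] : List (Fin n)) = 1 := by
  simp [mkl, FreeMonoid.ofList_nil]

lemma mkl_singleton (a : Fin n) : mkl [a] = ka a := rfl

lemma rel_eq {a b : FreeMonoid (Fin n)} (h : KisRel n a b) : kmk n a = kmk n b :=
  Quotient.sound (ConGen.Rel.of _ _ h)

lemma ka_idem (i : Fin n) : ka i * ka i = ka i := by
  have := rel_eq (KisRel.idem i)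
  simp only [map_mul] at this
  exact this

lemma ka_braid₁ {i j : Fin n} (h : i < j) : ka i * ka j * ka i = ka j * ka i := by
  have := rel_eq (KisRel.braid₁ (n := n) h)
  simp only [map_mul] at this
  exact this

lemma ka_braid₂ {i j : Fin n} (h : i < j) : ka j * ka i * ka j = ka j * ka i := by
  have := rel_eq (KisRel.braid₂ (n := n) h)
  simp only [map_mul] at this
  exact this

/-- Absorption on the right past smaller letters: `a_j w a_j = a_j w` if all letters
of `w` are `< j`. -/
lemma absorbA (j : Fin n) : ∀ l : List (Fin n), (∀ i ∈ l, i < j) →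
    ka j * mkl l * ka j = ka j * mkl l := by
  intro l
  induction l using List.reverseRecOn with
  | nil => intro _; simp [mkl_nil, ka_idem]
  | append_singleton t i ih =>
    intro h
    have hi : i < j := h i (by simp)
    have ht : ∀ x ∈ t, x < j := fun x hx => h x (by simp [hx])
    have iht := ih ht
    rw [mkl_append, mkl_singleton, ← mul_assoc]
    calc ka j * mkl t * ka i * ka j
        = ka j * mkl t * ka j * ka i * ka j := by rw [iht]
      _ = ka j * mkl t * (ka j * ka i * ka j) := by
          simp [mul_assoc]
      _ = ka j * mkl t * (ka j * ka i) := by rw [ka_braid₂ hi]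
      _ = ka j * mkl t * ka j * ka i := by rw [← mul_assoc]
      _ = ka j * mkl t * ka i := by rw [iht]

/-- Absorption on the left past larger letters: `a_j w a_j = w a_j` if all letters
of `w` are `> j`. -/
lemma absorbB (j : Fin n) : ∀ l : List (Fin n), (∀ i ∈ l, j < i) →
    ka j * (mkl l * ka j) = mkl l * ka j := by
  intro l
  induction l with
  | nil => simp [mkl_nil, ka_idem]
  | cons i t ih =>
    intro h
    have hi : j < i := h i (by simp)
    have ht : ∀ x ∈ t, j < x := fun x hx => h x (by simp [hx])
    have iht := ih ht
    rw [mkl_cons]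
    calc ka j * (ka i * mkl t * ka j)
        = ka j * (ka i * (mkl t * ka j)) := by rw [mul_assoc]
      _ = ka j * (ka i * (ka j * (mkl t * ka j))) := by rw [iht]
      _ = (ka j * ka i * ka j) * (mkl t * ka j) := by simp [mul_assoc]
      _ = (ka i * ka j) * (mkl t * ka j) := by rw [ka_braid₁ hi]
      _ = ka i * (ka j * (mkl t * ka j)) := by simp [mul_assoc]
      _ = ka i * (mkl t * ka j) := by rw [iht]
      _ = ka i * mkl t * ka j := by rw [mul_assoc]

/-- For a strictly decreasing list `l` and `j ∈ l`, `mkl l` absorbs `a_j` on both sides. -/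
lemma absorb_of_mem {l : List (Fin n)} (hs : l.Pairwise (· > ·)) {j : Fin n} (hj : j ∈ l) :
    mkl l * ka j = mkl l ∧ ka j * mkl l = mkl l := by
  obtain ⟨u, w, rfl⟩ := List.append_of_mem hj
  obtain ⟨hu, hw, huw⟩ := List.pairwise_append.mp hs
  have hwlt : ∀ x ∈ w, x < j := fun _ hx => List.rel_of_pairwise_cons hw hx
  have hw' : List.Pairwise (· > ·) w := hw.of_cons
  have hugt : ∀ x ∈ u, j < x := fun x hx => huw x hx j (by simp)
  constructor
  · rw [mkl_append, mkl_cons]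
    calc mkl u * (ka j * mkl w) * ka j
        = mkl u * (ka j * mkl w * ka j) := by simp [mul_assoc]
      _ = mkl u * (ka j * mkl w) := by rw [absorbA j w hwlt]
  · rw [mkl_append, mkl_cons]
    calc ka j * (mkl u * (ka j * mkl w))
        = (ka j * (mkl u * ka j)) * mkl w := by simp [mul_assoc]
      _ = (mkl u * ka j) * mkl w := by rw [absorbB j u hugt]
      _ = mkl u * (ka j * mkl w) := by simp [mul_assoc]

lemma eX_eq_mkl (X : Finset (Fin n)) : eX X = mkl ((X.sort (· ≤ ·)).reverse) := rfl

lemma sorted_gt (X : Finset (Fin n)) : ((X.sort (· ≤ ·)).reverse).Pairwise (· > ·) := by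
  exact List.pairwise_reverse.mpr (X.sortedLT_sort.pairwise)

lemma mem_revsort {X : Finset (Fin n)} {j : Fin n} :
    j ∈ (X.sort (· ≤ ·)).reverse ↔ j ∈ X := by
  simp [Finset.mem_sort]

/-- `e_X` absorbs any word over `X` on the right. -/
lemma eX_mul_mkl (X : Finset (Fin n)) : ∀ l : List (Fin n), (∀ i ∈ l, i ∈ X) →
    eX X * mkl l = eX X := by
  intro l
  induction l with
  | nil => simp [mkl_nil]
  | cons a t ih =>
    intro h
    have ha : a ∈ X := h a (by simp)
    rw [mkl_cons, ← mul_assoc]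
    have := (absorb_of_mem (sorted_gt X) (mem_revsort.mpr ha)).1
    rw [eX_eq_mkl, this, ← eX_eq_mkl]
    exact ih (fun x hx => h x (by simp [hx]))

/-- `e_X` absorbs any word over `X` on the left. -/
lemma mkl_mul_eX (X : Finset (Fin n)) : ∀ l : List (Fin n), (∀ i ∈ l, i ∈ X) →
    mkl l * eX X = eX X := by
  intro l
  induction l with
  | nil => simp [mkl_nil]
  | cons a t ih =>
    intro h
    have ha : a ∈ X := h a (by simp)
    rw [mkl_cons, mul_assoc, ih (fun x hx => h x (by simp [hx]))]
    rw [eX_eq_mkl]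
    exact (absorb_of_mem (sorted_gt X) (mem_revsort.mpr ha)).2

/- ### The content homomorphism -/

/-- Finsets of `Fin n` as a commutative monoid under union. -/
def CM (n : ℕ) := Finset (Fin n)

/-- The identity, viewed as a map into the content monoid. -/
def toCM : Finset (Fin n) → CM n := id

instance : CommMonoid (CM n) where
  mul := fun a b => toCM ((id a : Finset (Fin n)) ∪ (id b : Finset (Fin n)))
  one := toCM (∅ : Finset (Fin n))
  mul_assoc := fun a b c => congrArg toCM (Finset.union_assoc _ _ _)
  one_mul := fun a => congrArg toCM (Finset.empty_union _)
  mul_one := fun a => congrArg toCM (Finset.union_empty _)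
  mul_comm := fun a b => congrArg toCM (Finset.union_comm _ _)

lemma toCM_mul (a b : Finset (Fin n)) : toCM a * toCM b = toCM (a ∪ b) := rfl

lemma toCM_injective : Function.Injective (toCM (n := n)) := fun _ _ h => h

/-- The content homomorphism. -/
def cont : Kiselman n →* CM n :=
  PresentedMonoid.lift (fun i => toCM ({i} : Finset (Fin n))) (by
    intro a b h
    cases h with
    | idem i =>
      simp only [map_mul, FreeMonoid.lift_eval_of, toCM_mul]
      exact congrArg toCM (by simp)
    | braid₁ h =>
      simp only [map_mul, FreeMonoid.lift_eval_of, toCM_mul]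
      exact congrArg toCM (by ext x; simp)
    | braid₂ h =>
      simp only [map_mul, FreeMonoid.lift_eval_of, toCM_mul]
      exact congrArg toCM (by ext x; simp; tauto))

lemma cont_ka (i : Fin n) : cont (ka i) = toCM ({i} : Finset (Fin n)) := rfl

lemma cont_one : (cont (1 : Kiselman n)) = toCM ∅ := map_one _

lemma cont_mkl (l : List (Fin n)) : cont (mkl l) = toCM (l.toFinset : Finset (Fin n)) := by
  induction l with
  | nil => rw [mkl_nil, cont_one]; exact congrArg toCM (by simp)
  | cons a t ih =>
    rw [mkl_cons, map_mul, cont_ka, ih, toCM_mul]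
    exact congrArg toCM (by simp [List.toFinset_cons])

lemma cont_eX (X : Finset (Fin n)) : cont (eX X) = toCM X := by
  rw [eX_eq_mkl, cont_mkl]
  exact congrArg toCM (by simp)

end KiselmanAux

open KiselmanAux in
/-- Proposition: for idempotents `e_X, e_Y` of `K_n` (every idempotent is of this form,
with content `X` resp. `Y`), the natural order `e_X ≤ e_Y` holds iff `Y ⊆ X`. -/
theorem kiselman_natural_order (n : ℕ) (X Y : Finset (Fin n)) :
    (eX X * eX Y = eX X ∧ eX Y * eX X = eX X) ↔ Y ⊆ X := by
  constructor
  · rintro ⟨h₁, -⟩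
    have := congrArg cont h₁
    rw [map_mul, cont_eX, cont_eX, toCM_mul] at this
    have hxy : X ∪ Y = X := toCM_injective this
    intro y hy
    rw [← hxy]
    exact Finset.mem_union_right _ hy
  · intro hYX
    have hmem : ∀ i ∈ (Y.sort (· ≤ ·)).reverse, i ∈ X := fun i hi =>
      hYX (mem_revsort.mp hi)
    constructor
    · rw [eX_eq_mkl Y]
      exact eX_mul_mkl X _ hmem
    · rw [eX_eq_mkl Y]
      exact mkl_mul_eX X _ hmem
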